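/- Let a group Γ act by automorphisms α on a group Σ, let C be an abelian group, and let G = Σ ⋊ Γ be the semidirect product with multiplication (a,g)·(b,h) = (a α_g(b), gh). Let 𝒵(Γ↷Σ,C) be the abelian group of maps η : Γ × Σ → C satisfying η(g,ab) = η(g,a) + η(g,b) and η(gh,a) = η(g,α_h(a)) + η(h,a) for all g,h ∈ Γ, a,b ∈ Σ; let ℬ(Γ↷Σ,C) ≤ 𝒵(Γ↷Σ,C) be the subgroup of maps of the form η(g,a) = φ(α_g(a)) − φ(a) for some group homomorphism φ : Σ → C, and let ℋ(Γ↷Σ,C) be the quotient group. Then the map Ψ : H²(Γ,C) ⊕ ℋ(Γ↷Σ,C) → H²(G,C) induced by (Ψ(ω,η))((a,g),(b,h)) = ω(g,h) + η(g,b) is a well-defined injective group homomorphism, and its image is exactly the kernel of the restriction homomorphism H²(G,C) → H²(Σ,C) obtained by restricting cocycles to the subgroup Σ × {e} of G. -/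

import Mathlib

/-- A normalized 2-cocycle on a group `G` with values in an abelian group `C`. -/
def IsCocycle {G C : Type*} [Group G] [AddCommGroup C] (Ω : G → G → C) : Prop :=
  (∀ g h k, Ω g h + Ω (g * h) k = Ω g (h * k) + Ω h k) ∧
  (∀ g, Ω g 1 = 0) ∧ (∀ g, Ω 1 g = 0)

/-- A 2-coboundary on a group `G` with values in an abelian group `C`. -/
def IsCoboundary {G C : Type*} [Group G] [AddCommGroup C] (Ω : G → G → C) : Prop :=
  ∃ F : G → C, F 1 = 0 ∧ ∀ g h, Ω g h = F g + F h - F (g * h)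

/-- An element of `𝒵(Γ ↷ Σ, C)` for the action `α` of `Γ` on `N`. -/
def IsActionCocycle {Γ N C : Type*} [Group Γ] [Group N] [AddCommGroup C]
    (α : Γ →* MulAut N) (η : Γ → N → C) : Prop :=
  (∀ (g : Γ) (a b : N), η g (a * b) = η g a + η g b) ∧
  (∀ (g h : Γ) (a : N), η (g * h) a = η g (α h a) + η h a)

/-- An element of `ℬ(Γ ↷ Σ, C)` for the action `α` of `Γ` on `N`. -/
def IsActionCoboundary {Γ N C : Type*} [Group Γ] [Group N] [AddCommGroup C]
    (α : Γ →* MulAut N) (η : Γ → N → C) : Prop :=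
  ∃ φ : N → C, (∀ a b : N, φ (a * b) = φ a + φ b) ∧
    ∀ (g : Γ) (a : N), η g a = φ (α g a) - φ a

open SemidirectProduct

/-- The map `Ψ : H²(Γ,C) ⊕ ℋ(Γ↷Σ,C) → H²(G,C)`, `(Ψ(ω,η))((a,g),(b,h)) = ω(g,h) + η(g,b)`,
for the semidirect product `G = Σ ⋊ Γ`, is a well-defined injective group homomorphism
whose image is the kernel of the restriction map `H²(G,C) → H²(Σ,C)`. Expressed at the level
of cocycles: `Ψ(ω,η)` is a cocycle; it is a coboundary iff `ω` is a coboundary and `η ∈ ℬ`;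
its restriction to `Σ` is a coboundary; and every cocycle on `G` whose restriction to `Σ` is
a coboundary is cohomologous to some `Ψ(ω,η)`. -/
theorem semidirectProduct_secondCohomology_exact
    {Γ N C : Type*} [Group Γ] [Group N] [AddCommGroup C] (α : Γ →* MulAut N) :
    (∀ (ω : Γ → Γ → C) (η : Γ → N → C), IsCocycle ω → IsActionCocycle α η →
      IsCocycle (fun x y : N ⋊[α] Γ => ω x.right y.right + η x.right y.left))
    ∧
    (∀ (ω : Γ → Γ → C) (η : Γ → N → C), IsCocycle ω → IsActionCocycle α η →
      (IsCoboundary (fun x y : N ⋊[α] Γ => ω x.right y.right + η x.right y.left)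
        ↔ (IsCoboundary ω ∧ IsActionCoboundary α η)))
    ∧
    (∀ (ω : Γ → Γ → C) (η : Γ → N → C), IsCocycle ω → IsActionCocycle α η →
      IsCoboundary (fun a b : N =>
        (fun x y : N ⋊[α] Γ => ω x.right y.right + η x.right y.left)
          (SemidirectProduct.inl a) (SemidirectProduct.inl b)))
    ∧
    (∀ Ω : (N ⋊[α] Γ) → (N ⋊[α] Γ) → C, IsCocycle Ω →
      IsCoboundary (fun a b : N => Ω (SemidirectProduct.inl a) (SemidirectProduct.inl b)) →
      ∃ (ω : Γ → Γ → C) (η : Γ → N → C), IsCocycle ω ∧ IsActionCocycle α η ∧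
        IsCoboundary (fun x y : N ⋊[α] Γ =>
          Ω x y - (ω x.right y.right + η x.right y.left))) := by
  -- auxiliary facts about action cocycles
  have hηone : ∀ (η : Γ → N → C), IsActionCocycle α η → (∀ g, η g 1 = 0) ∧ (∀ a, η 1 a = 0) := by
    intro η ⟨ha, hm⟩
    constructor
    · intro g
      have h := ha g 1 1
      rw [mul_one] at h
      exact (left_eq_add.mp h)
    · intro a
      have h := hm 1 1 a
      simp only [mul_one, map_one, MulAut.one_apply] at h
      exact (left_eq_add.mp h)
  refine ⟨?_, ?_, ?_, ?_⟩
  · -- Part 1 : Ψ(ω,η) is a cocycle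
    rintro ω η ⟨hc, hn1, hn2⟩ hη
    obtain ⟨hη1, hη2⟩ := hηone η hη
    obtain ⟨ha, hm⟩ := hη
    refine ⟨?_, ?_, ?_⟩
    · intro x y z
      simp only [SemidirectProduct.mul_right, SemidirectProduct.mul_left]
      have hω : ω (x.right * y.right) z.right
          = ω x.right (y.right * z.right) + ω y.right z.right - ω x.right y.right := by
        rw [← hc x.right y.right z.right]; abel
      rw [hω, hm x.right y.right z.left, ha x.right y.left (α y.right z.left)]
      abel
    · intro x
      simp [hn1, hη1]
    · intro x
      simp [hn2, hη2]
  · -- Part 2 : coboundary iff both coboundaries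
    rintro ω η ⟨hc, hn1, hn2⟩ hη
    obtain ⟨hη1, hη2⟩ := hηone η hη
    obtain ⟨ha, hm⟩ := hη
    constructor
    · rintro ⟨F, hF1, hF⟩
      constructor
      · refine ⟨fun g => F (inr g), by simpa using hF1, fun g h => ?_⟩
        have h := hF (inr g) (inr h)
        simp only [right_inr, left_inr, hη1, add_zero, ← map_mul] at h
        exact h
      · refine ⟨fun b => -F (inl b), fun a b => ?_, fun g b => ?_⟩
        · have h := hF (inl a) (inl b)
          simp only [right_inl, left_inl, hn1, hη2, add_zero, ← map_mul] at h
          have : F (inl (a * b)) = F (inl a) + F (inl b) := by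
            have h' : F (inl a) + F (inl b) - F (inl (a * b)) = 0 := h.symm
            have := sub_eq_zero.mp h'
            exact this.symm
          show -F (inl (a * b)) = -F (inl a) + -F (inl b)
          rw [this]; abel
        · have key : (inr g * inl b : N ⋊[α] Γ) = inl (α g b) * inr g := by
            ext <;> simp
          have h1 := hF (inr g) (inl b)
          have h2 := hF (inl (α g b)) (inr g)
          simp only [right_inr, left_inl, right_inl, left_inr, hn1, hn2, hη1, hη2,
            zero_add, add_zero] at h1 h2
          rw [key] at h1
          have h2' : F (inl (α g b) * inr g) = F (inl (α g b)) + F (inr g) := by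
            exact (sub_eq_zero.mp h2.symm).symm
          rw [h2'] at h1
          rw [h1]; beta_reduce; abel
    · rintro ⟨⟨f, hf1, hf⟩, ⟨φ, hφa, hφ⟩⟩
      have hφ1 : φ 1 = 0 := by
        have := hφa 1 1
        rw [mul_one] at this
        exact (left_eq_add.mp this)
      refine ⟨fun x => f x.right - φ x.left, by simp [hf1, hφ1], fun x y => ?_⟩
      simp only [SemidirectProduct.mul_right, SemidirectProduct.mul_left]
      rw [hf x.right y.right, hφ x.right y.left, hφa x.left (α x.right y.left)]
      abel
  · -- Part 3 : restriction to N is (zero, hence) a coboundary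
    rintro ω η ⟨hc, hn1, hn2⟩ hη
    obtain ⟨hη1, hη2⟩ := hηone η hη
    exact ⟨fun _ => 0, rfl, fun a b => by simp [hn2, hη2]⟩
  · -- Part 4 : exactness
    rintro Ω ⟨hc, hn1, hn2⟩ ⟨F₀, hF₀1, hF₀⟩
    set F : N ⋊[α] Γ → C := fun x => F₀ x.left - Ω (inl x.left) (inr x.right) with hFdef
    have hF1 : F 1 = 0 := by simp [hFdef, hF₀1, hn2]
    set Ω' : (N ⋊[α] Γ) → (N ⋊[α] Γ) → C :=
      fun x y => Ω x y - (F x + F y - F (x * y)) with hΩ'def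
    have hc' : ∀ x y z, Ω' x y + Ω' (x * y) z = Ω' x (y * z) + Ω' y z := by
      intro x y z
      have hB : Ω (x * y) z = Ω x (y * z) + Ω y z - Ω x y := by
        rw [← hc x y z]; abel
      simp only [hΩ'def]
      rw [hB, ← mul_assoc]
      abel
    have hA : ∀ a b : N, Ω' (inl a) (inl b) = 0 := by
      intro a b
      have h : Ω (inl a) (inl b) = F₀ a + F₀ b - F₀ (a * b) := hF₀ a b
      simp only [hΩ'def, hFdef, ← map_mul, left_inl, right_inl, map_one, hn1]
      rw [h]; abel
    have hB : ∀ (a : N) (g : Γ), Ω' (inl a) (inr g) = 0 := by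
      intro a g
      have hmul : (inl a * inr g : N ⋊[α] Γ) = ⟨a, g⟩ := by ext <;> simp
      simp only [hΩ'def, hFdef, left_inl, right_inl, left_inr, right_inr, hmul, map_one, hn1]
      rw [hn2, hF₀1]
      abel
    have hC : ∀ (a : N) (z : N ⋊[α] Γ), Ω' (inl a) z = 0 := by
      intro a z
      have h := hc' (inl a) (inl z.left) (inr z.right)
      rw [← map_mul] at h
      simp only [hA, hB, inl_left_mul_inr_right, zero_add, add_zero] at h
      exact h.symm
    set ω : Γ → Γ → C := fun g h => Ω' (inr g) (inr h) with hωdef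
    set η : Γ → N → C := fun g b => Ω' (inr g) (inl b) with hηdef
    -- key computation lemmas
    have hkey3 : ∀ (c : N) (g h : Γ), Ω' (inl c * inr g) (inr h) = ω g h := by
      intro c g h
      have h1 := hc' (inl c) (inr g) (inr h)
      simp only [hB, hC, zero_add] at h1
      exact h1
    have hkey4 : ∀ (c : N) (g : Γ) (b : N), Ω' (inl c * inr g) (inl b) = η g b := by
      intro c g b
      have h1 := hc' (inl c) (inr g) (inl b)
      simp only [hB, hC, zero_add] at h1
      exact h1
    have hinrinl : ∀ (g : Γ) (b : N), (inr g * inl b : N ⋊[α] Γ) = inl (α g b) * inr g := by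
      intro g b; ext <;> simp
    have hD : ∀ x y : N ⋊[α] Γ, Ω' x y = ω x.right y.right + η x.right y.left := by
      intro x y
      have h1 := hc' (inl x.left) (inr x.right) y
      simp only [hB, hC, inl_left_mul_inr_right, zero_add] at h1
      have h2 := hc' (inr x.right) (inl y.left) (inr y.right)
      rw [hinrinl, hkey3, inl_left_mul_inr_right] at h2
      simp only [hB, add_zero] at h2
      rw [h1, ← h2]
      exact add_comm _ _
    have hω1 : ∀ g, ω g 1 = 0 := by
      intro g
      simp only [hωdef, map_one]
      have : Ω' (inr g) 1 = 0 := by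
        simp only [hΩ'def, mul_one, hn1]
        rw [hF1]; abel
      exact this
    have hω2 : ∀ g, ω 1 g = 0 := by
      intro g
      simp only [hωdef, map_one]
      have : Ω' 1 (inr g) = 0 := by
        simp only [hΩ'def, one_mul, hn2]
        rw [hF1]; abel
      exact this
    refine ⟨ω, η, ⟨?_, hω1, hω2⟩, ⟨?_, ?_⟩, ⟨F, hF1, ?_⟩⟩
    · intro g h k
      have := hc' (inr g) (inr h) (inr k)
      rw [← map_mul, ← map_mul] at this
      exact this
    · -- additivity of η
      intro g a b
      have h1 := hc' (inr g) (inl a) (inl b)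
      rw [hinrinl, hkey4, ← map_mul] at h1
      simp only [hA, add_zero] at h1
      exact h1.symm
    · -- η (g h) a = η g (α h a) + η h a
      intro g h a
      have h1 := hc' (inr g) (inr h) (inl a)
      rw [← map_mul, hinrinl] at h1
      have h2 := hc' (inr g) (inl (α h a)) (inr h)
      rw [hinrinl, hkey3] at h2
      simp only [hB, add_zero] at h2
      rw [← h2] at h1
      have h1' : ω g h + η (g * h) a
          = ω g h + (Ω' (inr g) (inl (α h a)) + η h a) := by
        rw [h1]; abel
      exact add_left_cancel h1'
    · -- the coboundary
      intro x y
      show Ω x y - (ω x.right y.right + η x.right y.left) = F x + F y - F (x * y)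
      rw [← hD x y]
      simp only [hΩ'def]
      abel
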